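/- arXiv:2410.00977 — 3 statements merged into one kernel-verified Lean document; each statement's English description precedes it below -/
import Mathlib

section
/- Let Γ be a group acting by isometries on a nonempty metric space X such that the action is cocompact (there is a compact set K ⊆ X with Γ·K = X) and metrically proper (for every x ∈ X and r > 0 the set {g ∈ Γ : d(x, g·x) ≤ r} is finite). Let G be a finitely generated group and let (φ_n) ∈ Hom(G,Γ) be an X-non-divergent sequence. Then ω-almost surely φ_n factors through the limit quotient φ∞ : G ↠ G/sker φ_n; moreover, there is an ω-large set of indices on which all the φ_n agree up to post-composition with inner automorphisms of Γ (in particular ker φ_n = sker φ_n on that set). -/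
open Set Filter

noncomputable def scalingFactor {X G Γ : Type*} (d : X → X → ℝ) (a : Γ → X → X)
    (S : Set G) (φ : G → Γ) : ℝ :=
  ⨅ x : X, sSup ((fun s => d x (a (φ s) x)) '' S)

def OmegaNonDivergent (ω : Ultrafilter ℕ) (f : ℕ → ℝ) : Prop :=
  ∃ C : ℝ, {n | f n ≤ C} ∈ ω

/-- If `Γ` acts isometrically, cocompactly and metrically properly on a
nonempty metric space `X`, then every `X`-non-divergent sequence `(φ_n) ∈ Hom(G,Γ)`
ω-almost surely factors through the limit quotient `φ∞ : G ↠ G/sker φ_n`; moreover on an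
ω-large set of indices all the `φ_n` agree up to post-composition with inner automorphisms
of `Γ`, and on that set `ker φ_n = sker φ_n`. -/
theorem nondivergent_factors
    (Γ : Type*) [Group Γ] (X : Type*) [MetricSpace X] [Nonempty X]
    (a : Γ →* (X ≃ᵢ X))
    (hcocpt : ∃ K : Set X, IsCompact K ∧ ∀ x : X, ∃ g : Γ, ∃ k ∈ K, a g k = x)
    (hproper : ∀ (x : X) (r : ℝ), 0 < r → {g : Γ | dist x (a g x) ≤ r}.Finite)
    (G : Type*) [Group G] (S : Set G) (hSfin : S.Finite)
    (hSgen : Subgroup.closure S = ⊤)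
    (ω : Ultrafilter ℕ) (hω : ∀ s : Set ℕ, s.Finite → s ∉ ω)
    (φ : ℕ → G →* Γ)
    (hnd : OmegaNonDivergent ω (fun n => scalingFactor dist (fun g x => a g x) S (φ n))) :
    ({n : ℕ | ∀ g : G, ({k : ℕ | φ k g = 1} ∈ ω) → φ n g = 1} ∈ ω) ∧
    ∃ I : Set ℕ, I ∈ ω ∧
      (∀ n ∈ I, ∀ n' ∈ I, ∃ γ : Γ, ∀ g : G, φ n' g = γ * φ n g * γ⁻¹) ∧
      (∀ n ∈ I, {g : G | φ n g = 1} = {g : G | {k : ℕ | φ k g = 1} ∈ ω}) := by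
  classical
  obtain ⟨C, hC⟩ := hnd
  obtain ⟨K, hKcpt, hKcover⟩ := hcocpt
  obtain ⟨x0⟩ := (inferInstance : Nonempty X)
  obtain ⟨D, hD⟩ := hKcpt.isBounded.subset_closedBall x0
  -- choose conjugating elements
  have key : ∀ n : ℕ, ∃ gn : Γ,
      scalingFactor dist (fun g x => a g x) S (φ n) ≤ C →
      ∀ s ∈ S, dist x0 (a (gn⁻¹ * φ n s * gn) x0) ≤ C + 1 + D + D := by
    intro n
    by_cases hn : scalingFactor dist (fun g x => a g x) S (φ n) ≤ C
    · have h1 : (⨅ x : X, sSup ((fun s => dist x (a (φ n s) x)) '' S)) < C + 1 :=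
        lt_of_le_of_lt hn (by linarith)
      obtain ⟨x, hx⟩ := exists_lt_of_ciInf_lt h1
      obtain ⟨gn, kn, hkn, hgn⟩ := hKcover x
      refine ⟨gn, fun _ s hs => ?_⟩
      have hdisp : dist x (a (φ n s) x) ≤ C + 1 :=
        le_trans (le_csSup ((hSfin.image _).bddAbove) ⟨s, hs, rfl⟩) hx.le
      have hkd : dist x0 kn ≤ D := by
        have := hD hkn
        rw [Metric.mem_closedBall] at this
        simpa [dist_comm] using this
      have hmid : dist kn (a (gn⁻¹ * φ n s * gn) kn) = dist x (a (φ n s) x) := by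
        have h2 : a (gn⁻¹ * φ n s * gn) kn = (a gn).symm (a (φ n s) (a gn kn)) := by
          have : a gn⁻¹ = (a gn)⁻¹ := map_inv a gn
          simp [map_mul, this]
          rfl
        rw [h2, hgn, ← (a gn).dist_eq kn ((a gn).symm (a (φ n s) x)),
          (a gn).apply_symm_apply, hgn]
      have hlast : dist (a (gn⁻¹ * φ n s * gn) kn) (a (gn⁻¹ * φ n s * gn) x0) = dist kn x0 :=
        (a _).dist_eq _ _
      calc dist x0 (a (gn⁻¹ * φ n s * gn) x0)
          ≤ dist x0 kn + dist kn (a (gn⁻¹ * φ n s * gn) kn)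
            + dist (a (gn⁻¹ * φ n s * gn) kn) (a (gn⁻¹ * φ n s * gn) x0) :=
            dist_triangle4 _ _ _ _
        _ ≤ D + (C + 1) + D := by
            rw [hmid, hlast, dist_comm kn x0]; gcongr
        _ = C + 1 + D + D := by ring
    · exact ⟨1, fun h => absurd h hn⟩
  choose g hg using key
  haveI : Finite ↥S := hSfin.to_subtype
  set r : ℝ := max (C + 1 + D + D) 1 with hr_def
  have hr : 0 < r := lt_of_lt_of_le one_pos (le_max_right _ _)
  have hF : {γ : Γ | dist x0 (a γ x0) ≤ r}.Finite := hproper x0 r hr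
  set t : ℕ → ↥S → Γ := fun n s => (g n)⁻¹ * φ n s * g n with ht
  have htF : ∀ n ∈ {n | scalingFactor dist (fun g x => a g x) S (φ n) ≤ C},
      ∀ s : ↥S, t n s ∈ {γ : Γ | dist x0 (a γ x0) ≤ r} :=
    fun n hn s => le_trans (hg n hn s s.2) (le_max_left _ _)
  have hTfin : (Set.univ.pi fun _ : ↥S => {γ : Γ | dist x0 (a γ x0) ≤ r}).Finite :=
    Set.Finite.pi fun _ => hF
  have hunion : (⋃ v ∈ Set.univ.pi fun _ : ↥S => {γ : Γ | dist x0 (a γ x0) ≤ r},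
      {n | n ∈ {n | scalingFactor dist (fun g x => a g x) S (φ n) ≤ C} ∧ t n = v}) ∈ ω := by
    refine Filter.mem_of_superset hC fun n hn => ?_
    exact Set.mem_biUnion (fun s _ => htF n hn s) ⟨hn, rfl⟩
  obtain ⟨v, hvT, hIω⟩ := (Ultrafilter.finite_biUnion_mem_iff hTfin).mp hunion
  set I : Set ℕ :=
    {n | n ∈ {n | scalingFactor dist (fun g x => a g x) S (φ n) ≤ C} ∧ t n = v} with hI
  -- conjugation claim
  have hconj : ∀ n ∈ I, ∀ n' ∈ I, ∀ x : G,
      φ n' x = (g n' * (g n)⁻¹) * φ n x * (g n' * (g n)⁻¹)⁻¹ := by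
    intro n hn n' hn'
    have hom_eq : ∀ x : G, (g n)⁻¹ * φ n x * g n = (g n')⁻¹ * φ n' x * g n' := by
      have heq : Set.EqOn (((MulAut.conj (g n)⁻¹).toMonoidHom.comp (φ n)) : G →* Γ)
          (((MulAut.conj (g n')⁻¹).toMonoidHom.comp (φ n')) : G →* Γ) S := by
        intro s hs
        have h1 : t n ⟨s, hs⟩ = v ⟨s, hs⟩ := by rw [hn.2]
        have h2 : t n' ⟨s, hs⟩ = v ⟨s, hs⟩ := by rw [hn'.2]
        have h3 : t n ⟨s, hs⟩ = t n' ⟨s, hs⟩ := h1.trans h2.symm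
        simpa [ht, MulAut.conj_apply, mul_assoc] using h3
      have := MonoidHom.eqOn_closure heq
      rw [hSgen] at this
      intro x
      have hx := this (Subgroup.mem_top x)
      simpa [MulAut.conj_apply, mul_assoc] using hx
    intro x
    have h := hom_eq x
    have h2 : φ n' x = g n' * ((g n)⁻¹ * φ n x * g n) * (g n')⁻¹ := by
      rw [h]; group
    rw [h2]; group
  have hker : ∀ n ∈ I, ∀ g0 : G, ({k | φ k g0 = 1} ∈ ω) → φ n g0 = 1 := by
    intro n hn g0 hg0
    obtain ⟨k, hk1, hk2⟩ := Ultrafilter.nonempty_of_mem (inter_mem hg0 hIω)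
    rw [hconj k hk2 n hn g0, hk1, mul_one, mul_inv_cancel]
  refine ⟨Filter.mem_of_superset hIω fun n hn g0 h => hker n hn g0 h,
    I, hIω, fun n hn n' hn' => ⟨g n' * (g n)⁻¹, hconj n hn n' hn'⟩, fun n hn => ?_⟩
  ext g0
  simp only [Set.mem_setOf_eq]
  constructor
  · intro h
    refine Filter.mem_of_superset hIω fun k hk => ?_
    show φ k g0 = 1
    rw [hconj n hn k hk g0, h, mul_one, mul_inv_cancel]
  · exact hker n hn g0
end

section
/- For any group Γ, the following are equivalent: (1) Γ is equationally noetherian; (2) for every finitely generated group G and every sequence (φ_n) ∈ Hom(G,Γ), ω-almost surely φ_n factors through the limit quotient φ∞ : G ↠ G/sker φ_n, i.e. {n ∈ ℕ : sker φ_n ⊆ ker φ_n} ∈ ω; (3) for every finitely generated group G and every sequence (φ_n) ∈ Hom(G,Γ), there exists some n such that φ_n factors through the limit quotient φ∞ (i.e. sker φ_n ⊆ ker φ_n). -/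
open Set Filter

def EquationallyNoetherian (Γ : Type*) [Group Γ] : Prop :=
  ∀ (n : ℕ) (E : Set (FreeGroup (Fin n))), ∃ E₀ : Set (FreeGroup (Fin n)),
    E₀ ⊆ E ∧ E₀.Finite ∧
    {g : Fin n → Γ | ∀ w ∈ E, FreeGroup.lift g w = 1} =
      {g : Fin n → Γ | ∀ w ∈ E₀, FreeGroup.lift g w = 1}

instance freeGroup_countable (n : ℕ) : Countable (FreeGroup (Fin n)) := by
  have h : Function.Surjective (FreeGroup.mk : List (Fin n × Bool) → FreeGroup (Fin n)) :=
    fun x => Quot.exists_rep x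
  exact h.countable

instance freeGroup_fg (n : ℕ) : Group.FG (FreeGroup (Fin n)) := by
  rw [Group.fg_iff]
  exact ⟨Set.range FreeGroup.of, FreeGroup.closure_range_of _, Set.finite_range _⟩

/-- (1) ⇒ (2): equational noetherianity implies ω-almost sure factoring. -/
lemma en_implies_as {Γ : Type*} [Group Γ] (ω : Ultrafilter ℕ)
    (hEN : EquationallyNoetherian Γ)
    (G : Type) [Group G] (hG : Group.FG G) (φ : ℕ → G →* Γ) :
    {n : ℕ | ∀ g : G, ({k : ℕ | φ k g = 1} ∈ ω) → φ n g = 1} ∈ ω := by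
  obtain ⟨S, hScl, hSfin⟩ := Group.fg_iff.mp hG
  -- a surjection from a free group of rank m onto G
  obtain ⟨m, f0, hf0⟩ := hSfin.fin_embedding
  set gen : Fin m → G := fun i => f0 i with hgen
  set π : FreeGroup (Fin m) →* G := FreeGroup.lift gen with hπ
  have hπsurj : Function.Surjective π := by
    rw [← MonoidHom.range_eq_top, hπ, FreeGroup.range_lift_eq_closure]
    rw [eq_top_iff, ← hScl]
    apply Subgroup.closure_mono
    rw [← hf0]
  -- the set of equations satisfied ω-almost surely
  set E : Set (FreeGroup (Fin m)) := {w | {k : ℕ | φ k (π w) = 1} ∈ ω} with hE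
  obtain ⟨E₀, hE₀E, hE₀fin, hVeq⟩ := hEN m E
  have hT : (⋂ w ∈ E₀, {k : ℕ | φ k (π w) = 1}) ∈ ω :=
    (Filter.biInter_mem hE₀fin).mpr (fun w hw => hE₀E hw)
  refine Filter.mem_of_superset hT ?_
  intro k hk g hg
  simp only [Set.mem_iInter] at hk
  -- the tuple in Γ^m induced by φ k
  set gv : Fin m → Γ := fun i => φ k (gen i) with hgv
  have hlift : ∀ w : FreeGroup (Fin m), FreeGroup.lift gv w = φ k (π w) := by
    intro w
    have : FreeGroup.lift gv = (φ k).comp π := by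
      apply FreeGroup.ext_hom
      intro i
      simp [hgv, hπ]
    rw [this]; rfl
  have hgv₀ : gv ∈ {g : Fin m → Γ | ∀ w ∈ E₀, FreeGroup.lift g w = 1} := by
    intro w hw
    rw [hlift]
    exact hk w hw
  have hgvE : ∀ w ∈ E, FreeGroup.lift gv w = 1 := by
    have := hVeq ▸ hgv₀
    exact this
  obtain ⟨w, rfl⟩ := hπsurj g
  have hwE : w ∈ E := hg
  have := hgvE w hwE
  rwa [hlift] at this

/-- (3) ⇒ (1): pointwise factoring implies equational noetherianity. -/
lemma pt_implies_en {Γ : Type*} [Group Γ] (ω : Ultrafilter ℕ)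
    (hω : ∀ s : Set ℕ, s.Finite → s ∉ ω)
    (h : ∀ (G : Type) [Group G], Group.FG G → ∀ φ : ℕ → G →* Γ,
      ∃ n : ℕ, ∀ g : G, ({k : ℕ | φ k g = 1} ∈ ω) → φ n g = 1) :
    EquationallyNoetherian Γ := by
  intro m E
  by_contra hcon
  push_neg at hcon
  -- enumerate the (countable) free group
  obtain ⟨e, he⟩ := exists_surjective_nat (FreeGroup (Fin m))
  -- for each k, a tuple satisfying the first k enumerated equations of E but not all of E
  have key : ∀ k : ℕ, ∃ g : Fin m → Γ,
      (∀ w ∈ (e '' Set.Iic k) ∩ E, FreeGroup.lift g w = 1) ∧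
      ¬ (∀ w ∈ E, FreeGroup.lift g w = 1) := by
    intro k
    have hfin : ((e '' Set.Iic k) ∩ E).Finite :=
      ((Set.finite_Iic k).image e).inter_of_left E
    have hne := hcon ((e '' Set.Iic k) ∩ E) Set.inter_subset_right hfin
    have hsub : {g : Fin m → Γ | ∀ w ∈ E, FreeGroup.lift g w = 1} ⊆
        {g : Fin m → Γ | ∀ w ∈ ((e '' Set.Iic k) ∩ E), FreeGroup.lift g w = 1} :=
      fun g hg w hw => hg w hw.2
    have : ¬ ({g : Fin m → Γ | ∀ w ∈ ((e '' Set.Iic k) ∩ E), FreeGroup.lift g w = 1} ⊆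
        {g : Fin m → Γ | ∀ w ∈ E, FreeGroup.lift g w = 1}) := by
      intro hsub'
      exact hne (Set.Subset.antisymm hsub hsub')
    rw [Set.not_subset] at this
    obtain ⟨g, hg1, hg2⟩ := this
    exact ⟨g, hg1, hg2⟩
  choose g hg1 hg2 using key
  set φ : ℕ → FreeGroup (Fin m) →* Γ := fun k => FreeGroup.lift (g k) with hφ
  obtain ⟨n, hn⟩ := h (FreeGroup (Fin m)) (freeGroup_fg m) φ
  apply hg2 n
  intro w hw
  -- w ∈ E is killed by φ k for all large k
  obtain ⟨i, rfl⟩ := he w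
  have howm : {k : ℕ | φ k (e i) = 1} ∈ ω := by
    have hcof : {k : ℕ | φ k (e i) = 1}ᶜ ⊆ Set.Iio i := by
      intro k hk
      by_contra hki
      simp only [Set.mem_Iio, not_lt] at hki
      exact hk (hg1 k (e i) ⟨⟨i, hki, rfl⟩, hw⟩)
    have : {k : ℕ | φ k (e i) = 1}ᶜ ∉ ω := hω _ ((Set.finite_Iio i).subset hcof)
    exact (Ultrafilter.compl_notMem_iff).mp this
  exact hn (e i) howm

/-- [GR-HU, Lemma 3.5]. A group `Γ` is equationally noetherian iff for
every finitely generated group `G` and every sequence `(φ_n) ∈ Hom(G,Γ)`, ω-almost surely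
`φ_n` factors through the limit quotient (i.e. `sker φ_n ⊆ ker φ_n`), iff for every such
sequence some `φ_n` factors through the limit quotient. -/
theorem equationallyNoetherian_iff_factoring
    (Γ : Type*) [Group Γ]
    (ω : Ultrafilter ℕ) (hω : ∀ s : Set ℕ, s.Finite → s ∉ ω) :
    (EquationallyNoetherian Γ ↔
      ∀ (G : Type) [Group G], Group.FG G → ∀ φ : ℕ → G →* Γ,
        {n : ℕ | ∀ g : G, ({k : ℕ | φ k g = 1} ∈ ω) → φ n g = 1} ∈ ω) ∧
    (EquationallyNoetherian Γ ↔
      ∀ (G : Type) [Group G], Group.FG G → ∀ φ : ℕ → G →* Γ,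
        ∃ n : ℕ, ∀ g : G, ({k : ℕ | φ k g = 1} ∈ ω) → φ n g = 1) := by
  have h12 : EquationallyNoetherian Γ →
      ∀ (G : Type) [Group G], Group.FG G → ∀ φ : ℕ → G →* Γ,
        {n : ℕ | ∀ g : G, ({k : ℕ | φ k g = 1} ∈ ω) → φ n g = 1} ∈ ω :=
    fun hEN G _ hG φ => en_implies_as ω hEN G hG φ
  have h23 : (∀ (G : Type) [Group G], Group.FG G → ∀ φ : ℕ → G →* Γ,
        {n : ℕ | ∀ g : G, ({k : ℕ | φ k g = 1} ∈ ω) → φ n g = 1} ∈ ω) →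
      ∀ (G : Type) [Group G], Group.FG G → ∀ φ : ℕ → G →* Γ,
        ∃ n : ℕ, ∀ g : G, ({k : ℕ | φ k g = 1} ∈ ω) → φ n g = 1 := by
    intro h G _ hG φ
    obtain ⟨n, hn⟩ := Filter.nonempty_of_mem (h G hG φ)
    exact ⟨n, hn⟩
  have h31 := pt_implies_en ω hω (Γ := Γ)
  exact ⟨⟨h12, fun h => h31 (h23 h)⟩, ⟨fun h => h23 (h12 h), h31⟩⟩
end

section
/- Let Γ be a group, G a finitely generated group, and (φ_n) ∈ Hom(G,Γ) a sequence such that the limit group L = G/sker φ_n is finitely presented relative to subgroups P₁,…,P_k of L. Suppose that for each j there is a subgroup P̃_j ≤ G with φ∞(P̃_j) = P_j such that φ_n|_{P̃_j} factors through φ∞|_{P̃_j} ω-almost surely (i.e. {n : ker φ∞ ∩ P̃_j ⊆ ker φ_n} ∈ ω). Then φ_n factors through φ∞ ω-almost surely. -/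
open Set Filter

def stableKer (ω : Ultrafilter ℕ) {G Γ : Type*} [Group G] [Group Γ]
    (φ : ℕ → G →* Γ) : Subgroup G where
  carrier := {g | {n | φ n g = 1} ∈ ω}
  one_mem' := by
    have : {n : ℕ | φ n 1 = 1} = Set.univ := by
      ext n; simp
    simp only [Set.mem_setOf_eq] at *
    rw [this]
    exact Filter.univ_mem
  mul_mem' := by
    intro a b ha hb
    have : {n | φ n a = 1} ∩ {n | φ n b = 1} ∈ ω := Filter.inter_mem ha hb
    refine Filter.mem_of_superset this ?_
    rintro n ⟨h1, h2⟩
    simp only [Set.mem_setOf_eq] at h1 h2 ⊢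
    simp [map_mul, h1, h2]
  inv_mem' := by
    intro a ha
    refine Filter.mem_of_superset ha ?_
    intro n h1
    simp only [Set.mem_setOf_eq] at h1 ⊢
    simp [map_inv, h1]

instance stableKer_normal (ω : Ultrafilter ℕ) {G Γ : Type*} [Group G] [Group Γ]
    (φ : ℕ → G →* Γ) : (stableKer ω φ).Normal := by
  constructor
  intro a ha g
  refine Filter.mem_of_superset ha ?_
  intro n h1
  simp only [Set.mem_setOf_eq] at h1 ⊢
  simp [map_mul, h1]

/-- `L` is finitely presented relative to the subgroups `P j`: there is a surjection from
`(P 1 ∗ ⋯ ∗ P k) ∗ F`, `F` free of finite rank, onto `L` restricting to the inclusion on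
each `P j`, whose kernel is the normal closure of a finite set. -/
def RelFinitelyPresented {L : Type*} [Group L] {k : ℕ} (P : Fin k → Subgroup L) : Prop :=
  ∃ (r : ℕ)
    (π : Monoid.Coprod (Monoid.CoprodI fun j : Fin k => ↥(P j)) (FreeGroup (Fin r)) →* L),
    Function.Surjective π ∧
    (∀ (j : Fin k) (x : ↥(P j)),
      π (Monoid.Coprod.inl (Monoid.CoprodI.of x)) = (x : L)) ∧
    ∃ T : Set (Monoid.Coprod (Monoid.CoprodI fun j : Fin k => ↥(P j)) (FreeGroup (Fin r))),
      T.Finite ∧ π.ker = Subgroup.normalClosure T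

/-- [GR-HU, Lemma 3.19]. If the limit group `L = G/sker φ_n` is finitely
presented relative to subgroups `P₁, …, P_k`, and each `P j` admits a lift `P̃ j ≤ G` with
`φ∞(P̃ j) = P j` such that `φ_n|_{P̃ j}` ω-almost surely factors through `φ∞|_{P̃ j}`, then
ω-almost surely `φ_n` factors through `φ∞`. -/
theorem factors_of_relatively_presented
    (Γ : Type*) [Group Γ] (G : Type*) [Group G] (hG : Group.FG G)
    (ω : Ultrafilter ℕ) (hω : ∀ s : Set ℕ, s.Finite → s ∉ ω)
    (φ : ℕ → G →* Γ) (k : ℕ)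
    (P : Fin k → Subgroup (G ⧸ stableKer ω φ))
    (hfp : RelFinitelyPresented P)
    (hlift : ∀ j : Fin k, ∃ Pt : Subgroup G,
      Subgroup.map (QuotientGroup.mk' (stableKer ω φ)) Pt = P j ∧
      {n : ℕ | ∀ g ∈ Pt, g ∈ stableKer ω φ → φ n g = 1} ∈ ω) :
    {n : ℕ | ∀ g ∈ stableKer ω φ, φ n g = 1} ∈ ω := by
  classical
  obtain ⟨r, π, hπsurj, hπinl, T, hTfin, hker⟩ := hfp
  choose Pt hPt hPtω using hlift
  set q := QuotientGroup.mk' (stableKer ω φ) with hqdef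
  have hqker : ∀ g : G, q g = 1 ↔ g ∈ stableKer ω φ := by
    intro g
    rw [← MonoidHom.mem_ker, hqdef, QuotientGroup.ker_mk']
  have hmem : ∀ (j : Fin k) (x : ↥(P j)), ∃ g, g ∈ Pt j ∧ q g = ↑x := by
    intro j x
    have hx : (x : G ⧸ stableKer ω φ) ∈ Subgroup.map q (Pt j) := by
      rw [hPt j]; exact x.2
    exact Subgroup.mem_map.mp hx
  choose σ hσmem hσq using hmem
  choose ρ hρ using fun i : Fin r =>
    QuotientGroup.mk'_surjective (stableKer ω φ) (π (Monoid.Coprod.inr (FreeGroup.of i)))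
  -- descended homomorphisms on the P j, for good n
  have homJ_ex : ∀ (n : ℕ) (j : Fin k), ∃ ψ : ↥(P j) →* Γ,
      (∀ g ∈ Pt j, g ∈ stableKer ω φ → φ n g = 1) → ∀ x : ↥(P j), ψ x = φ n (σ j x) := by
    intro n j
    by_cases h : ∀ g ∈ Pt j, g ∈ stableKer ω φ → φ n g = 1
    · refine ⟨⟨⟨fun x => φ n (σ j x), ?_⟩, ?_⟩, fun _ _ => rfl⟩
      · apply h _ (hσmem j 1)
        rw [← hqker, hσq j 1]
        simp
      · intro x y
        have hmem' : σ j (x * y) * (σ j x * σ j y)⁻¹ ∈ Pt j :=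
          mul_mem (hσmem j _) (inv_mem (mul_mem (hσmem j x) (hσmem j y)))
        have hk : σ j (x * y) * (σ j x * σ j y)⁻¹ ∈ stableKer ω φ := by
          rw [← hqker]
          simp only [map_mul, map_inv, hσq, Subgroup.coe_mul]
          group
        have h1 := h _ hmem' hk
        rw [map_mul, map_inv, mul_inv_eq_one] at h1
        simpa [map_mul] using h1
    · exact ⟨1, fun h' => absurd h' h⟩
  choose homJ hhomJ using homJ_ex
  set Ψ : ℕ → Monoid.Coprod (Monoid.CoprodI fun j : Fin k => ↥(P j)) (FreeGroup (Fin r)) →* Γ :=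
    fun n => Monoid.Coprod.lift (Monoid.CoprodI.lift (homJ n))
      (FreeGroup.lift fun i => φ n (ρ i)) with hΨdef
  -- the key subgroup of elements w admitting a "lift" g ∈ G
  set Acond : ℕ → Prop := fun n => ∀ j, ∀ g ∈ Pt j, g ∈ stableKer ω φ → φ n g = 1 with hAconddef
  let S : Subgroup (Monoid.Coprod (Monoid.CoprodI fun j : Fin k => ↥(P j)) (FreeGroup (Fin r))) :=
    { carrier := {w | ∃ g : G, q g = π w ∧ ∀ n, Acond n → Ψ n w = φ n g}
      one_mem' := ⟨1, by simp⟩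
      mul_mem' := by
        rintro a b ⟨ga, hga, ha⟩ ⟨gb, hgb, hb⟩
        exact ⟨ga * gb, by rw [map_mul, map_mul, hga, hgb],
          fun n hn => by rw [map_mul, map_mul, ha n hn, hb n hn]⟩
      inv_mem' := by
        rintro a ⟨ga, hga, ha⟩
        exact ⟨ga⁻¹, by rw [map_inv, map_inv, hga],
          fun n hn => by rw [map_inv, map_inv, ha n hn]⟩ }
  have hS : ∀ w, w ∈ S := by
    intro w
    refine Monoid.Coprod.induction_on w ?_ ?_ (fun x y hx hy => S.mul_mem hx hy)
    · intro m
      refine Monoid.CoprodI.induction_on (motive := fun m => Monoid.Coprod.inl m ∈ S) m ?_ ?_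
        (fun x y hx hy => show Monoid.Coprod.inl (x * y) ∈ S by
          rw [map_mul]; exact S.mul_mem hx hy)
      · simpa using S.one_mem
      · intro j x
        refine ⟨σ j x, by rw [hσq, hπinl], fun n hn => ?_⟩
        rw [hΨdef]
        simp only [Monoid.Coprod.lift_apply_inl, Monoid.CoprodI.lift_of]
        exact hhomJ n j (hn j) x
    · intro f
      refine FreeGroup.induction_on (C := fun f => Monoid.Coprod.inr f ∈ S) f ?_ ?_
        (fun i hi => show Monoid.Coprod.inr ((pure i : FreeGroup (Fin r)))⁻¹ ∈ S by
          rw [map_inv]; exact S.inv_mem hi)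
        (fun x y hx hy => show Monoid.Coprod.inr (x * y) ∈ S by
          rw [map_mul]; exact S.mul_mem hx hy)
      · simpa using S.one_mem
      · intro i
        refine ⟨ρ i, hρ i, fun n hn => ?_⟩
        rw [hΨdef]
        simp only [Monoid.Coprod.lift_apply_inr]
        exact FreeGroup.lift_apply_of
  -- sections for a finite generating set of G
  obtain ⟨Sgen, hSgen, hSgenfin⟩ := Group.fg_iff.mp hG
  choose W hW using fun x : G => hπsurj (q x)
  choose gsec hgq hgΨ using fun x : G => hS (W x)
  have hdiff : ∀ x : G, x⁻¹ * gsec x ∈ stableKer ω φ := by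
    intro x
    rw [← hqker, map_mul, map_inv, hgq, hW]
    simp
  -- the three almost-everywhere events
  have hA : ∀ᶠ n in (ω : Filter ℕ), Acond n :=
    Filter.eventually_all.2 fun j => hPtω j
  have hTsub : ∀ t ∈ T, ∃ gt, gt ∈ stableKer ω φ ∧ ∀ n, Acond n → Ψ n t = φ n gt := by
    intro t ht
    obtain ⟨g, hg1, hg2⟩ := hS t
    have hπt : π t = 1 := by
      have : t ∈ π.ker := hker ▸ Subgroup.subset_normalClosure ht
      exact this
    refine ⟨g, ?_, hg2⟩
    rw [← hqker, hg1, hπt]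
  choose gT hgT1 hgT2 using hTsub
  have : Finite ↥T := hTfin
  have hB : ∀ᶠ n in (ω : Filter ℕ), ∀ t : ↥T, φ n (gT t t.2) = 1 :=
    Filter.eventually_all.2 fun t => hgT1 t t.2
  have : Finite ↥Sgen := hSgenfin
  have hC : ∀ᶠ n in (ω : Filter ℕ), ∀ x : ↥Sgen, φ n ((x : G)⁻¹ * gsec x) = 1 :=
    Filter.eventually_all.2 fun x => hdiff x
  -- conclusion
  have final : ∀ᶠ n in (ω : Filter ℕ), ∀ g ∈ stableKer ω φ, φ n g = 1 := by
    filter_upwards [hA, hB, hC] with n hnA hnB hnC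
    have hker' : T ⊆ ↑(Ψ n).ker := by
      intro t ht
      have : Ψ n t = 1 := by rw [hgT2 t ht n hnA]; exact hnB ⟨t, ht⟩
      exact this
    have hkerle : π.ker ≤ (Ψ n).ker := by
      rw [hker]
      exact Subgroup.normalClosure_le_normal hker'
    let R : Subgroup G :=
      { carrier := {x | ∃ w, π w = q x ∧ Ψ n w = φ n x}
        one_mem' := ⟨1, by simp⟩
        mul_mem' := by
          rintro a b ⟨wa, hwa, ha⟩ ⟨wb, hwb, hb⟩
          exact ⟨wa * wb, by rw [map_mul, map_mul, hwa, hwb],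
            by rw [map_mul, map_mul, ha, hb]⟩
        inv_mem' := by
          rintro a ⟨wa, hwa, ha⟩
          exact ⟨wa⁻¹, by rw [map_inv, map_inv, hwa], by rw [map_inv, map_inv, ha]⟩ }
    have hRtop : ∀ x : G, x ∈ R := by
      have hle : Subgroup.closure Sgen ≤ R := by
        rw [Subgroup.closure_le]
        intro x hx
        refine ⟨W x, hW x, ?_⟩
        rw [hgΨ x n hnA]
        have h1 := hnC ⟨x, hx⟩
        rw [map_mul, map_inv, inv_mul_eq_one] at h1
        exact h1.symm
      intro x
      exact hle (hSgen ▸ Subgroup.mem_top x)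
    intro g hg
    obtain ⟨w, hw1, hw2⟩ := hRtop g
    have hπw : w ∈ π.ker := by
      have : π w = 1 := by rw [hw1, (hqker g).2 hg]
      exact this
    have hΨw : Ψ n w = 1 := hkerle hπw
    rw [← hw2, hΨw]
  exact final
end
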